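/- Let a ∈ C([0,1]) be strongly degenerate with degeneracy point x₀ ∈ [0,1] and assume Hypothesis (H). Then there exists a constant C > 0 such that for every u ∈ H²_a(0,1) one has ‖u'‖²_{L²(0,1)} ≤ C (‖u‖²_{L²(0,1)} + ‖√a·u''‖²_{L²(0,1)}). Consequently, the norms ‖u‖²_{H²_a(0,1)} = ‖u‖²_{L²(0,1)} + ‖u'‖²_{L²(0,1)} + ‖√a·u''‖²_{L²(0,1)} and ‖u‖²_{2,a} = ‖u‖²_{L²(0,1)} + ‖√a·u''‖²_{L²(0,1)} are equivalent on H²_a(0,1). -/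

import Mathlib

open MeasureTheory Set Filter intervalIntegral

/-- `f` is absolutely continuous on `[c,d]` with (a.e.) derivative `g`,
expressed via the fundamental theorem of calculus. -/
def ACOn (c d : ℝ) (f g : ℝ → ℝ) : Prop :=
  MeasureTheory.IntegrableOn g (Set.Icc c d) ∧
    ∀ x ∈ Set.Icc c d, f x = f c + ∫ t in c..x, g t

/-- `f` is locally absolutely continuous on `[0,1] \ {x₀}` with derivative `g`. -/
def LocACOn (x₀ : ℝ) (f g : ℝ → ℝ) : Prop :=
  ∀ c d : ℝ, 0 ≤ c → d ≤ 1 → c ≤ d → x₀ ∉ Set.Icc c d → ACOn c d f g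

/-- `a` is weakly degenerate with degeneracy point `x₀`. -/
def WeaklyDeg (a : ℝ → ℝ) (x₀ : ℝ) : Prop :=
  ContinuousOn a (Set.Icc 0 1) ∧ x₀ ∈ Set.Icc (0:ℝ) 1 ∧ a x₀ = 0 ∧
    (∀ x ∈ Set.Icc (0:ℝ) 1, x ≠ x₀ → 0 < a x) ∧
    MeasureTheory.IntegrableOn (fun x => 1 / a x) (Set.Ioo 0 1)

/-- `a` is strongly degenerate with degeneracy point `x₀`. -/
def StronglyDeg (a : ℝ → ℝ) (x₀ : ℝ) : Prop :=
  ContinuousOn a (Set.Icc 0 1) ∧ x₀ ∈ Set.Icc (0:ℝ) 1 ∧ a x₀ = 0 ∧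
    (∀ x ∈ Set.Icc (0:ℝ) 1, x ≠ x₀ → 0 < a x) ∧
    ¬ MeasureTheory.IntegrableOn (fun x => 1 / a x) (Set.Ioo 0 1)

/-- Hypothesis (H): there is `K ∈ [1,2)` such that `x ↦ |x-x₀|^K / a x` is
non-increasing on `[0,x₀)` and non-decreasing on `(x₀,1]`. -/
def HypH (a : ℝ → ℝ) (x₀ : ℝ) : Prop :=
  ∃ K : ℝ, 1 ≤ K ∧ K < 2 ∧
    AntitoneOn (fun x => |x - x₀| ^ K / a x) (Set.Ico 0 x₀) ∧
    MonotoneOn (fun x => |x - x₀| ^ K / a x) (Set.Ioc x₀ 1)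

/-- The squared `L²(0,1)` norm. -/
noncomputable def sqL2 (f : ℝ → ℝ) : ℝ := ∫ x in Set.Ioo (0:ℝ) 1, (f x) ^ 2

/-- Cauchy–Schwarz for set integrals of nonnegative real functions. -/
lemma cs_sqrt {s : Set ℝ} (f g : ℝ → ℝ)
    (hf : ∀ x ∈ s, 0 ≤ f x) (hg : ∀ x ∈ s, 0 ≤ g x)
    (hs : MeasurableSet s)
    (hf2 : IntegrableOn (fun x => f x ^ 2) s) (hg2 : IntegrableOn (fun x => g x ^ 2) s)
    (hfm : AEStronglyMeasurable f (volume.restrict s))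
    (hgm : AEStronglyMeasurable g (volume.restrict s)) :
    ∫ x in s, f x * g x ≤ Real.sqrt (∫ x in s, f x ^ 2) * Real.sqrt (∫ x in s, g x ^ 2) := by
  have hpq : Real.HolderConjugate 2 2 := Real.holderConjugate_iff.mpr ⟨one_lt_two, by norm_num⟩
  have h2 : ENNReal.ofReal (2:ℝ) = 2 := by norm_num
  have hfL : MemLp f (ENNReal.ofReal (2:ℝ)) (volume.restrict s) := by
    rw [h2]; exact (memLp_two_iff_integrable_sq hfm).mpr hf2
  have hgL : MemLp g (ENNReal.ofReal (2:ℝ)) (volume.restrict s) := by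
    rw [h2]; exact (memLp_two_iff_integrable_sq hgm).mpr hg2
  have hfn : 0 ≤ᵐ[volume.restrict s] f :=
    (ae_restrict_iff' hs).mpr (Eventually.of_forall hf)
  have hgn : 0 ≤ᵐ[volume.restrict s] g :=
    (ae_restrict_iff' hs).mpr (Eventually.of_forall hg)
  have := MeasureTheory.integral_mul_le_Lp_mul_Lq_of_nonneg hpq hfn hgn hfL hgL
  have e1 : ∫ x in s, f x ^ (2:ℝ) = ∫ x in s, f x ^ 2 := by
    refine integral_congr_ae (Filter.Eventually.of_forall fun x => ?_)
    exact Real.rpow_two (f x)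
  have e2 : ∫ x in s, g x ^ (2:ℝ) = ∫ x in s, g x ^ 2 := by
    refine integral_congr_ae (Filter.Eventually.of_forall fun x => ?_)
    exact Real.rpow_two (g x)
  rw [e1, e2] at this
  calc ∫ x in s, f x * g x ≤
      (∫ x in s, f x ^ 2) ^ (1/(2:ℝ)) * (∫ x in s, g x ^ 2) ^ (1/(2:ℝ)) := this
    _ = Real.sqrt (∫ x in s, f x ^ 2) * Real.sqrt (∫ x in s, g x ^ 2) := by
        rw [Real.sqrt_eq_rpow, Real.sqrt_eq_rpow]

/-- A continuous function attains a value at most its average. -/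
lemma exists_le_avg {f : ℝ → ℝ} {p q B : ℝ} (hpq : p < q)
    (hc : ContinuousOn f (Icc p q))
    (hB : ∫ x in Icc p q, f x ≤ B) :
    ∃ x ∈ Icc p q, f x * (q - p) ≤ B := by
  obtain ⟨x₀, hx₀, hmin⟩ := isCompact_Icc.exists_isMinOn (nonempty_Icc.mpr hpq.le) hc
  refine ⟨x₀, hx₀, ?_⟩
  have hint : IntegrableOn f (Icc p q) := hc.integrableOn_Icc
  have : ∫ _x in Icc p q, f x₀ ≤ ∫ x in Icc p q, f x :=
    setIntegral_mono_on (integrableOn_const measure_Icc_lt_top.ne)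
      hint measurableSet_Icc (fun x hx => hmin hx)
  rw [setIntegral_const, Real.volume_real_Icc_of_le hpq.le, smul_eq_mul] at this
  linarith [this, hB]

/-- Split an integral over `Ioo 0 1` at an interior point. -/
lemma integral_Ioo_split (f : ℝ → ℝ) {x₀ : ℝ} (h0 : 0 ≤ x₀) (h1 : x₀ ≤ 1)
    (hf : IntegrableOn f (Ioo 0 1)) :
    ∫ x in Ioo (0:ℝ) 1, f x = (∫ x in Ioo 0 x₀, f x) + ∫ x in Ioo x₀ 1, f x := by
  have i1 : IntervalIntegrable f volume 0 x₀ := by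
    rw [intervalIntegrable_iff_integrableOn_Ioo_of_le h0]
    exact hf.mono_set (Ioo_subset_Ioo le_rfl h1)
  have i2 : IntervalIntegrable f volume x₀ 1 := by
    rw [intervalIntegrable_iff_integrableOn_Ioo_of_le h1]
    exact hf.mono_set (Ioo_subset_Ioo h0 le_rfl)
  have := intervalIntegral.integral_add_adjacent_intervals i1 i2
  rw [integral_of_le h0, integral_of_le h1, integral_of_le (le_trans h0 h1),
    integral_Ioc_eq_integral_Ioo, integral_Ioc_eq_integral_Ioo, integral_Ioc_eq_integral_Ioo]
    at this
  linarith

/-- Reflection `x ↦ 1 - x` for integrals over `Ioo`. -/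
lemma integral_Ioo_refl (f : ℝ → ℝ) {c d : ℝ} (h : c ≤ d) :
    ∫ x in Ioo c d, f (1 - x) = ∫ x in Ioo (1-d) (1-c), f x := by
  rw [← integral_Ioc_eq_integral_Ioo, ← integral_of_le h,
    integral_comp_sub_left f 1, integral_of_le (by linarith), integral_Ioc_eq_integral_Ioo]

lemma integrableOn_Ioo_refl {f : ℝ → ℝ} {c d : ℝ} (hcd : c ≤ d)
    (h : IntegrableOn f (Ioo c d)) :
    IntegrableOn (fun x => f (1 - x)) (Ioo (1-d) (1-c)) := by
  rw [← intervalIntegrable_iff_integrableOn_Ioo_of_le (by linarith : (1:ℝ)-d ≤ 1-c)]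
  rw [← intervalIntegrable_iff_integrableOn_Ioo_of_le hcd] at h
  exact (h.comp_sub_left 1).symm

lemma integrableOn_Icc_refl {f : ℝ → ℝ} {c d : ℝ} (hcd : c ≤ d)
    (h : IntegrableOn f (Icc c d)) :
    IntegrableOn (fun x => f (1 - x)) (Icc (1-d) (1-c)) := by
  rw [← intervalIntegrable_iff_integrableOn_Icc_of_le (by linarith : (1:ℝ)-d ≤ 1-c)]
  rw [← intervalIntegrable_iff_integrableOn_Icc_of_le hcd] at h
  exact (h.comp_sub_left 1).symm

lemma sum_three_sq (a b c : ℝ) : (a + b + c)^2 ≤ 3*(a^2 + b^2 + c^2) := by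
  nlinarith [sq_nonneg (a - b), sq_nonneg (a - c), sq_nonneg (b - c)]

lemma two_sq_aux (X Y Z : ℝ) (h : X^2 ≤ Z) : (Y - X)^2 ≤ 2*Y^2 + 2*Z := by
  nlinarith [sq_nonneg (Y + X)]

set_option maxHeartbeats 1000000 in
lemma oneSided (a : ℝ → ℝ) (x₀ K M : ℝ)
    (hx0 : 0 ≤ x₀) (hx1 : x₀ < 1) (hK1 : 1 ≤ K) (hK2 : K < 2) (hM : 0 < M)
    (hw : ∀ t ∈ Ioc x₀ 1, (t - x₀) ^ K ≤ M * a t)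
    (hapos : ∀ x ∈ Icc (0:ℝ) 1, 0 ≤ a x) :
    ∃ C : ℝ, 0 ≤ C ∧ ∀ u u' u'' : ℝ → ℝ,
      ACOn 0 1 u u' →
      IntegrableOn (fun x => (u' x)^2) (Ioo 0 1) →
      LocACOn x₀ u' u'' →
      IntegrableOn (fun x => a x * (u'' x)^2) (Ioo 0 1) →
      ∫ x in Ioo x₀ 1, (u' x)^2 ≤
        C * ((∫ x in Ioo (0:ℝ) 1, (u x)^2) + ∫ x in Ioo (0:ℝ) 1, a x * (u'' x)^2) := by
  set L : ℝ := 1 - x₀ with hL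
  have hLpos : 0 < L := by rw [hL]; linarith
  have hL1 : L ≤ 1 := by rw [hL]; linarith
  set h : ℝ := L / 4 with hh
  have hhpos : 0 < h := by positivity
  set K' : ℝ := (K + 2) / 2 with hK'
  have hK'1 : 1 < K' := by rw [hK']; linarith
  have hK'2 : K' < 2 := by rw [hK']; linarith
  have hKK' : K ≤ K' := by rw [hK']; linarith
  set κ : ℝ := K' - 1 with hκ
  have hκpos : 0 < κ := by rw [hκ]; linarith
  set e : ℝ := 1 - K' with he
  have he0 : e < 0 := by rw [he]; linarith
  have he1 : (-1:ℝ) < e := by rw [he]; linarith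
  have he1' : 0 < e + 1 := by linarith
  set c₁ : ℝ := M * L ^ (K' - K) with hc₁
  have hc₁pos : 0 < c₁ := mul_pos hM (Real.rpow_pos_of_pos hLpos _)
  set cB : ℝ := 18 * L / h ^ 3 with hcB
  have hcB0 : 0 ≤ cB := by positivity
  set cA : ℝ := (6 * L ^ 3 * h ^ e / h ^ 2 + 2 * (L ^ (e+1) / (e+1))) * c₁ / κ with hcA
  have hcA0 : 0 ≤ cA := by
    apply div_nonneg _ hκpos.le
    apply mul_nonneg _ hc₁pos.le
    have h1 : (0:ℝ) ≤ h ^ e := Real.rpow_nonneg hhpos.le _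
    have h2 : (0:ℝ) ≤ L ^ (e+1) := Real.rpow_nonneg hLpos.le _
    positivity
  refine ⟨cB + cA, by positivity, ?_⟩
  intro u u' u'' hu hu2 hu' hA
  set B : ℝ := ∫ x in Ioo (0:ℝ) 1, (u x)^2 with hB
  set A : ℝ := ∫ x in Ioo (0:ℝ) 1, a x * (u'' x)^2 with hAa
  have hA0 : 0 ≤ A := setIntegral_nonneg measurableSet_Ioo
    (fun x hx => mul_nonneg (hapos x ⟨hx.1.le, hx.2.le⟩) (sq_nonneg _))
  have hB0 : 0 ≤ B := setIntegral_nonneg measurableSet_Ioo (fun x _ => sq_nonneg _)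
  -- continuity of u on [0,1]
  have hucont : ContinuousOn u (Icc 0 1) := by
    have hint : IntegrableOn u' (uIcc 0 1) := by
      rw [uIcc_of_le (by norm_num : (0:ℝ) ≤ 1)]; exact hu.1
    have hprim := (continuousOn_const (c := u 0)).add
      (intervalIntegral.continuousOn_primitive_interval hint)
    rw [uIcc_of_le (by norm_num : (0:ℝ) ≤ 1)] at hprim
    exact hprim.congr (fun x hx => hu.2 x hx)
  have huInt : IntegrableOn (fun x => (u x)^2) (Ioo 0 1) :=
    ((hucont.pow 2).integrableOn_Icc).mono_set Ioo_subset_Icc_self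
  -- improved weight bound
  have hw' : ∀ s ∈ Ioc x₀ 1, (s - x₀) ^ K' ≤ c₁ * a s := by
    intro s hs
    have h1 : 0 < s - x₀ := by linarith [hs.1]
    have h2 : s - x₀ ≤ L := by rw [hL]; linarith [hs.2]
    have hsplit : (s - x₀) ^ K' = (s - x₀) ^ (K' - K) * (s - x₀) ^ K := by
      rw [← Real.rpow_add h1]; ring_nf
    rw [hsplit, hc₁]
    calc (s - x₀) ^ (K' - K) * (s - x₀) ^ K
        ≤ L ^ (K' - K) * (M * a s) :=
          mul_le_mul (Real.rpow_le_rpow h1.le h2 (by linarith)) (hw s hs)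
            (Real.rpow_nonneg h1.le _) (Real.rpow_nonneg hLpos.le _)
      _ = M * L ^ (K' - K) * a s := by ring
  -- FTC for u' on (x₀, 1]
  have hu''int : ∀ t, x₀ < t → t ≤ 1 → IntegrableOn u'' (Icc t 1) := fun t ht ht1 =>
    (hu' t 1 (le_trans hx0 ht.le) le_rfl ht1 (fun hmem => absurd hmem.1 (not_le.mpr ht))).1
  have hftc : ∀ t, x₀ < t → t ≤ 1 → u' t = u' 1 - ∫ s in t..1, u'' s := by
    intro t ht ht1
    have hac := hu' t 1 (le_trans hx0 ht.le) le_rfl ht1 (fun hmem => absurd hmem.1 (not_le.mpr ht))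
    have h1 := hac.2 1 ⟨ht1, le_rfl⟩
    linarith
  set D : ℝ := c₁ * A / κ with hD
  have hD0 : 0 ≤ D := by positivity
  -- the key pointwise bound on the remainder R t = ∫ t..1 u''
  have hRbound : ∀ t, x₀ < t → t ≤ 1 → (∫ s in t..1, u'' s)^2 ≤ D * (t - x₀) ^ e := by
    intro t ht ht1
    have htpos : 0 < t - x₀ := by linarith
    have htL : t - x₀ ≤ L := by rw [hL]; linarith
    have hIooIoc : Ioo t 1 ⊆ Ioc x₀ 1 := fun s hs => ⟨lt_trans ht hs.1, hs.2.le⟩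
    have hIoosub : Ioo t 1 ⊆ Ioo 0 1 := Ioo_subset_Ioo (by linarith) le_rfl
    -- squares of the two factors
    have hsqf : ∀ s : ℝ, x₀ < s → ((s - x₀) ^ (-(K'/2)))^2 = (s - x₀) ^ (-K') := by
      intro s hs
      have h0 : (0:ℝ) ≤ s - x₀ := by linarith
      rw [← Real.rpow_two, ← Real.rpow_mul h0]
      norm_num
    have hsqg : ∀ s : ℝ, x₀ < s →
        ((s - x₀) ^ (K'/2) * |u'' s|)^2 = (s - x₀) ^ K' * (u'' s)^2 := by
      intro s hs
      have h0 : (0:ℝ) ≤ s - x₀ := by linarith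
      rw [mul_pow, sq_abs, ← Real.rpow_two, ← Real.rpow_mul h0]
      norm_num
    -- integrability of f²
    have hIf2 : IntegrableOn (fun s => ((s - x₀) ^ (-(K'/2)))^2) (Ioo t 1) := by
      have hii : IntervalIntegrable (fun s => s ^ (-K')) volume (t - x₀) (1 - x₀) := by
        apply intervalIntegrable_rpow
        right
        rw [uIcc_of_le (by linarith : t - x₀ ≤ 1 - x₀)]
        intro hmem
        exact absurd hmem.1 (not_le.mpr htpos)
      have hii2 := hii.comp_sub_right x₀
      rw [show t - x₀ + x₀ = t by ring, show 1 - x₀ + x₀ = 1 by ring,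
        intervalIntegrable_iff_integrableOn_Ioo_of_le ht1] at hii2
      exact hii2.congr_fun (fun s hs => (hsqf s (lt_trans ht hs.1)).symm) measurableSet_Ioo
    -- measurability pieces
    have hu''m : AEStronglyMeasurable u'' (volume.restrict (Ioo t 1)) :=
      (((hu''int t ht ht1).mono_set Ioo_subset_Icc_self)).aestronglyMeasurable
    have hwcont : ContinuousOn (fun s : ℝ => (s - x₀) ^ (K'/2)) (Ioo t 1) := by
      apply ContinuousOn.rpow_const (by fun_prop)
      intro x hx
      exact Or.inl (sub_ne_zero.mpr (ne_of_gt (lt_trans ht hx.1)))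
    have hwcont' : ContinuousOn (fun s : ℝ => (s - x₀) ^ (-(K'/2))) (Ioo t 1) := by
      apply ContinuousOn.rpow_const (by fun_prop)
      intro x hx
      exact Or.inl (sub_ne_zero.mpr (ne_of_gt (lt_trans ht hx.1)))
    have hfm : AEStronglyMeasurable (fun s : ℝ => (s - x₀) ^ (-(K'/2)))
        (volume.restrict (Ioo t 1)) := hwcont'.aestronglyMeasurable measurableSet_Ioo
    have hgm : AEStronglyMeasurable (fun s : ℝ => (s - x₀) ^ (K'/2) * |u'' s|)
        (volume.restrict (Ioo t 1)) :=
      (hwcont.aestronglyMeasurable measurableSet_Ioo).mul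
        (continuous_abs.comp_aestronglyMeasurable hu''m)
    -- integrability of g² by domination
    have hag : Integrable (fun s => c₁ * (a s * (u'' s)^2)) (volume.restrict (Ioo t 1)) :=
      ((hA.mono_set hIoosub)).const_mul c₁
    have hIg2 : IntegrableOn (fun s => ((s - x₀) ^ (K'/2) * |u'' s|)^2) (Ioo t 1) := by
      apply Integrable.mono' hag
      · exact (hgm.mul hgm).congr (Filter.Eventually.of_forall (fun s => (sq ((s - x₀) ^ (K'/2) * |u'' s|)).symm))
      · rw [ae_restrict_iff' measurableSet_Ioo]
        refine Eventually.of_forall (fun s hs => ?_)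
        have hs' : s ∈ Ioc x₀ 1 := hIooIoc hs
        rw [Real.norm_eq_abs, abs_of_nonneg (sq_nonneg _), hsqg s hs'.1, ← mul_assoc]
        exact mul_le_mul_of_nonneg_right (hw' s hs') (sq_nonneg _)
    -- Cauchy-Schwarz
    have hcs := cs_sqrt (s := Ioo t 1) (fun s => (s - x₀) ^ (-(K'/2)))
      (fun s => (s - x₀) ^ (K'/2) * |u'' s|)
      (fun x hx => Real.rpow_nonneg (by linarith [hIooIoc hx |>.1] : (0:ℝ) ≤ x - x₀) _)
      (fun x hx => mul_nonneg (Real.rpow_nonneg (by linarith [hIooIoc hx |>.1]) _) (abs_nonneg _))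
      measurableSet_Ioo hIf2 hIg2 hfm hgm
    -- identify the product integrand with |u''|
    have hprod : ∀ s ∈ Ioo t 1,
        (s - x₀) ^ (-(K'/2)) * ((s - x₀) ^ (K'/2) * |u'' s|) = |u'' s| := by
      intro s hs
      have h0 : 0 < s - x₀ := by linarith [hs.1]
      rw [← mul_assoc, ← Real.rpow_add h0]
      norm_num
    -- |R t| ≤ CS product
    have hRabs : |∫ s in t..1, u'' s| ≤
        Real.sqrt (∫ s in Ioo t 1, ((s - x₀) ^ (-(K'/2)))^2) *
        Real.sqrt (∫ s in Ioo t 1, ((s - x₀) ^ (K'/2) * |u'' s|)^2) := by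
      have h1 : |∫ s in t..1, u'' s| ≤ ∫ s in t..1, |u'' s| :=
        intervalIntegral.abs_integral_le_integral_abs ht1
      have h2 : ∫ s in t..1, |u'' s| = ∫ s in Ioo t 1, |u'' s| := by
        rw [integral_of_le ht1, integral_Ioc_eq_integral_Ioo]
      have h3 : ∫ s in Ioo t 1, |u'' s| =
          ∫ s in Ioo t 1, (s - x₀) ^ (-(K'/2)) * ((s - x₀) ^ (K'/2) * |u'' s|) :=
        (setIntegral_congr_fun measurableSet_Ioo (fun s hs => hprod s hs)).symm
      calc |∫ s in t..1, u'' s| ≤ ∫ s in t..1, |u'' s| := h1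
        _ = ∫ s in Ioo t 1, (s - x₀) ^ (-(K'/2)) * ((s - x₀) ^ (K'/2) * |u'' s|) := by
            rw [h2, h3]
        _ ≤ _ := hcs
    -- compute/bound the two integrals
    have hPt : ∫ s in Ioo t 1, ((s - x₀) ^ (-(K'/2)))^2 ≤ (t - x₀) ^ e / κ := by
      have h1 : ∫ s in Ioo t 1, ((s - x₀) ^ (-(K'/2)))^2
          = ∫ s in Ioo t 1, (s - x₀) ^ (-K') :=
        setIntegral_congr_fun measurableSet_Ioo (fun s hs => hsqf s (lt_trans ht hs.1))
      have h2 : ∫ s in Ioo t 1, (s - x₀) ^ (-K') = ∫ s in t..1, (s - x₀) ^ (-K') := by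
        rw [integral_of_le ht1, integral_Ioc_eq_integral_Ioo]
      have h3 : (∫ s in t..1, (s - x₀) ^ (-K'))
          = ∫ s in (t - x₀)..(1 - x₀), s ^ (-K') := by
        rw [intervalIntegral.integral_comp_sub_right (fun s => s ^ (-K')) x₀]
      have h4 : ∫ s in (t - x₀)..(1 - x₀), s ^ (-K')
          = ((1 - x₀) ^ (-K' + 1) - (t - x₀) ^ (-K' + 1)) / (-K' + 1) := by
        apply integral_rpow
        right
        constructor
        · intro hcon; linarith
        · rw [uIcc_of_le (by linarith : t - x₀ ≤ 1 - x₀)]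
          intro hmem
          exact absurd hmem.1 (not_le.mpr htpos)
      have he' : -K' + 1 = e := by rw [he]; ring
      have hYnn : (0:ℝ) ≤ (1 - x₀) ^ e := Real.rpow_nonneg (by linarith) _
      rw [h1, h2, h3, h4, he']
      have hflip : ((1 - x₀) ^ e - (t - x₀) ^ e) / e
          = ((t - x₀) ^ e - (1 - x₀) ^ e) / κ := by
        rw [show κ = -e by rw [hκ, he]; ring]
        ring
      rw [hflip, div_le_div_iff_of_pos_right hκpos]
      linarith
    have hPt0 : 0 ≤ ∫ s in Ioo t 1, ((s - x₀) ^ (-(K'/2)))^2 :=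
      setIntegral_nonneg measurableSet_Ioo (fun s _ => sq_nonneg _)
    have hQt0 : 0 ≤ ∫ s in Ioo t 1, ((s - x₀) ^ (K'/2) * |u'' s|)^2 :=
      setIntegral_nonneg measurableSet_Ioo (fun s _ => sq_nonneg _)
    have hQt : ∫ s in Ioo t 1, ((s - x₀) ^ (K'/2) * |u'' s|)^2 ≤ c₁ * A := by
      have h1 : ∫ s in Ioo t 1, ((s - x₀) ^ (K'/2) * |u'' s|)^2
          = ∫ s in Ioo t 1, (s - x₀) ^ K' * (u'' s)^2 :=
        setIntegral_congr_fun measurableSet_Ioo (fun s hs => hsqg s (lt_trans ht hs.1))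
      have h2 : ∫ s in Ioo t 1, (s - x₀) ^ K' * (u'' s)^2
          ≤ ∫ s in Ioo t 1, c₁ * (a s * (u'' s)^2) := by
        apply setIntegral_mono_on _ hag measurableSet_Ioo
        · intro s hs
          have hs' := hIooIoc hs
          rw [← mul_assoc]
          exact mul_le_mul_of_nonneg_right (hw' s hs') (sq_nonneg _)
        · exact hIg2.congr_fun (fun s hs => hsqg s (lt_trans ht hs.1)) measurableSet_Ioo
      have h3 : ∫ s in Ioo t 1, c₁ * (a s * (u'' s)^2)
          = c₁ * ∫ s in Ioo t 1, a s * (u'' s)^2 := MeasureTheory.integral_const_mul c₁ _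
      have h4 : ∫ s in Ioo t 1, a s * (u'' s)^2 ≤ A := by
        apply setIntegral_mono_set hA _ (HasSubset.Subset.eventuallyLE hIoosub)
        exact (ae_restrict_iff' measurableSet_Ioo).mpr (Eventually.of_forall
          (fun s hs => mul_nonneg (hapos s ⟨hs.1.le, hs.2.le⟩) (sq_nonneg _)))
      rw [h1]
      refine le_trans h2 ?_
      rw [h3]
      exact mul_le_mul_of_nonneg_left h4 hc₁pos.le
    have habs2 : (∫ s in t..1, u'' s)^2 ≤
        (∫ s in Ioo t 1, ((s - x₀) ^ (-(K'/2)))^2) *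
        (∫ s in Ioo t 1, ((s - x₀) ^ (K'/2) * |u'' s|)^2) := by
      have h1 := pow_le_pow_left₀ (abs_nonneg (∫ s in t..1, u'' s)) hRabs 2
      rw [sq_abs] at h1
      refine le_trans h1 ?_
      rw [mul_pow, Real.sq_sqrt hPt0, Real.sq_sqrt hQt0]
    calc (∫ s in t..1, u'' s)^2 ≤ _ := habs2
      _ ≤ ((t - x₀)^e/κ) * (c₁ * A) :=
          mul_le_mul hPt hQt hQt0 (div_nonneg (Real.rpow_nonneg htpos.le _) hκpos.le)
      _ = D * (t - x₀)^e := by rw [hD]; ring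
  -- choice of sample points away from the degeneracy
  have h2h : x₀ + 2*h = x₀ + (1 - x₀)/2 := by rw [hh, hL]; ring
  have h35h : x₀ + 3*h + h/2 = x₀ + (1 - x₀)*7/8 := by rw [hh, hL]; ring
  have hsub1 : Icc (x₀ + h) (x₀ + 2*h) ⊆ Ioo 0 1 := by
    intro x hx
    refine ⟨by linarith [hx.1], ?_⟩
    have := hx.2; rw [h2h] at this; linarith
  have hsub2 : Icc (x₀ + 3*h) (x₀ + 3*h + h/2) ⊆ Ioo 0 1 := by
    intro x hx
    refine ⟨by linarith [hx.1], ?_⟩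
    have := hx.2; rw [h35h] at this; linarith
  have hunn : 0 ≤ᵐ[volume.restrict (Ioo (0:ℝ) 1)] (fun x => (u x)^2) :=
    Eventually.of_forall (fun x => sq_nonneg _)
  have havg1 : ∫ x in Icc (x₀ + h) (x₀ + 2*h), (u x)^2 ≤ B :=
    setIntegral_mono_set huInt hunn (HasSubset.Subset.eventuallyLE hsub1)
  have havg2 : ∫ x in Icc (x₀ + 3*h) (x₀ + 3*h + h/2), (u x)^2 ≤ B :=
    setIntegral_mono_set huInt hunn (HasSubset.Subset.eventuallyLE hsub2)
  obtain ⟨q₁, hq₁mem, hq₁⟩ := exists_le_avg (by linarith : x₀ + h < x₀ + 2*h)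
    ((hucont.pow 2).mono (Subset.trans hsub1 Ioo_subset_Icc_self)) havg1
  obtain ⟨q₂, hq₂mem, hq₂⟩ := exists_le_avg (by linarith : x₀ + 3*h < x₀ + 3*h + h/2)
    ((hucont.pow 2).mono (Subset.trans hsub2 Ioo_subset_Icc_self)) havg2
  have hq₁' : (u q₁)^2 * h ≤ B := by
    rw [show x₀ + 2*h - (x₀ + h) = h by ring] at hq₁; exact hq₁
  have hq₂' : (u q₂)^2 * (h/2) ≤ B := by
    rw [show x₀ + 3*h + h/2 - (x₀ + 3*h) = h/2 by ring] at hq₂; exact hq₂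
  have hq₁x₀ : x₀ < q₁ := by linarith [hq₁mem.1]
  have hq₂x₀ : x₀ < q₂ := by linarith [hq₂mem.1]
  have hq₁1 : q₁ ≤ 1 := le_of_lt (hsub1 hq₁mem).2
  have hq₂1 : q₂ ≤ 1 := le_of_lt (hsub2 hq₂mem).2
  have hq₁0 : 0 ≤ q₁ := le_of_lt (hsub1 hq₁mem).1
  have hq₂0 : 0 ≤ q₂ := le_of_lt (hsub2 hq₂mem).1
  have hq12 : q₁ < q₂ := by linarith [hq₁mem.2, hq₂mem.1]
  have hdelta : h ≤ q₂ - q₁ := by linarith [hq₁mem.2, hq₂mem.1]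
  have hdeltaL : q₂ - q₁ ≤ L := by
    have := hq₂mem.2; rw [h35h] at this
    have h1 := hq₁mem.1
    rw [hL]; rw [hh, hL] at h1; linarith
  -- difference formula
  have hiiq2 : IntervalIntegrable u' volume 0 q₂ := by
    apply IntegrableOn.intervalIntegrable
    rw [uIcc_of_le hq₂0]
    exact hu.1.mono_set (Icc_subset_Icc le_rfl hq₂1)
  have hiiq1 : IntervalIntegrable u' volume 0 q₁ := by
    apply IntegrableOn.intervalIntegrable
    rw [uIcc_of_le hq₁0]
    exact hu.1.mono_set (Icc_subset_Icc le_rfl hq₁1)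
  have hq21 : u q₂ - u q₁ = ∫ t in q₁..q₂, u' t := by
    have h1 := hu.2 q₁ ⟨hq₁0, hq₁1⟩
    have h2 := hu.2 q₂ ⟨hq₂0, hq₂1⟩
    have h3 := intervalIntegral.integral_interval_sub_left hiiq2 hiiq1
    rw [h1, h2, ← h3]
    ring
  -- the remainder function R
  set R : ℝ → ℝ := fun t => ∫ s in t..1, u'' s with hR
  have hRcont : ContinuousOn R (Icc q₁ 1) := by
    have h0 : IntegrableOn u'' (uIcc q₁ 1) := by
      rw [uIcc_of_le hq₁1]; exact hu''int q₁ hq₁x₀ hq₁1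
    have := intervalIntegral.continuousOn_primitive_interval_left (μ := volume) h0
    rwa [uIcc_of_le hq₁1] at this
  have hRii : IntervalIntegrable R volume q₁ q₂ := by
    apply ContinuousOn.intervalIntegrable
    rw [uIcc_of_le hq12.le]
    exact hRcont.mono (Icc_subset_Icc le_rfl hq₂1)
  have hsplit : ∫ t in q₁..q₂, u' t = (q₂ - q₁) * u' 1 - ∫ t in q₁..q₂, R t := by
    have heq : EqOn u' (fun t => u' 1 - R t) (uIcc q₁ q₂) := by
      intro t htm
      rw [uIcc_of_le hq12.le] at htm
      exact hftc t (lt_of_lt_of_le hq₁x₀ htm.1) (le_trans htm.2 hq₂1)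
    rw [intervalIntegral.integral_congr heq,
      intervalIntegral.integral_sub intervalIntegrable_const hRii,
      intervalIntegral.integral_const, smul_eq_mul]
  set ρ : ℝ := Real.sqrt (D * h ^ e) with hρ
  have hρ0 : 0 ≤ ρ := Real.sqrt_nonneg _
  have hρsq : ρ^2 = D * h ^ e := Real.sq_sqrt (mul_nonneg hD0 (Real.rpow_nonneg hhpos.le _))
  have hRsmall : ∀ t ∈ Set.uIoc q₁ q₂, ‖R t‖ ≤ ρ := by
    intro t htm
    rw [Set.uIoc_of_le hq12.le] at htm
    have ht0 : x₀ < t := lt_trans hq₁x₀ htm.1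
    have ht1 : t ≤ 1 := le_trans htm.2 hq₂1
    have h1 : R t ^ 2 ≤ D * (t - x₀) ^ e := hRbound t ht0 ht1
    have h2 : (t - x₀) ^ e ≤ h ^ e :=
      Real.rpow_le_rpow_of_nonpos hhpos (by linarith [htm.1, hq₁mem.1]) he0.le
    have h3 : R t ^ 2 ≤ D * h ^ e := le_trans h1 (mul_le_mul_of_nonneg_left h2 hD0)
    rw [Real.norm_eq_abs, ← Real.sqrt_sq_eq_abs]
    exact Real.sqrt_le_sqrt h3
  have hintR : |∫ t in q₁..q₂, R t| ≤ ρ * |q₂ - q₁| := by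
    have := intervalIntegral.norm_integral_le_of_norm_le_const hRsmall
    rwa [Real.norm_eq_abs] at this
  -- bound on u' 1
  have hu'1 : h^2 * (u' 1)^2 ≤ 9 * B / h + 3 * (D * h ^ e) * L^2 := by
    have e0 : (q₂ - q₁) * u' 1 = (u q₂ - u q₁) + ∫ t in q₁..q₂, R t := by
      rw [hq21, hsplit]; ring
    have e1 : h * |u' 1| ≤ |u q₁| + |u q₂| + ρ * L := by
      have a1 : |(q₂ - q₁) * u' 1| ≤ |u q₂ - u q₁| + |∫ t in q₁..q₂, R t| := by
        rw [e0]; exact abs_add_le _ _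
      have a2 : |u q₂ - u q₁| ≤ |u q₂| + |u q₁| := abs_sub _ _
      have a3 : |(q₂ - q₁) * u' 1| = (q₂ - q₁) * |u' 1| := by
        rw [abs_mul, abs_of_nonneg (by linarith : (0:ℝ) ≤ q₂ - q₁)]
      have a4 : |q₂ - q₁| = q₂ - q₁ := abs_of_nonneg (by linarith)
      have a5 : h * |u' 1| ≤ (q₂ - q₁) * |u' 1| :=
        mul_le_mul_of_nonneg_right hdelta (abs_nonneg _)
      have a6 : ρ * (q₂ - q₁) ≤ ρ * L := mul_le_mul_of_nonneg_left hdeltaL hρ0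
      rw [a4] at hintR
      linarith
    have e2 : (h * |u' 1|)^2 ≤ (|u q₁| + |u q₂| + ρ * L)^2 := by
      apply pow_le_pow_left₀ (by positivity) e1
    have e3 : (h * |u' 1|)^2 = h^2 * (u' 1)^2 := by
      rw [mul_pow, sq_abs]
    have e4 : (|u q₁| + |u q₂| + ρ * L)^2
        ≤ 3 * ((u q₁)^2 + (u q₂)^2 + ρ^2 * L^2) := by
      have b1 := sq_abs (u q₁)
      have b2 := sq_abs (u q₂)
      refine le_trans (sum_three_sq |u q₁| |u q₂| (ρ*L)) (le_of_eq ?_)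
      rw [sq_abs, sq_abs, mul_pow]
    have e5 : (u q₁)^2 ≤ B / h := by
      rw [le_div_iff₀ hhpos]; exact hq₁'
    have e6 : (u q₂)^2 ≤ 2 * B / h := by
      rw [le_div_iff₀ hhpos]
      linarith [hq₂']
    rw [← e3]
    refine le_trans e2 (le_trans e4 ?_)
    rw [hρsq]
    have : 9 * B / h = 3 * (B/h + 2*B/h) := by ring
    rw [this]
    linarith [e5, e6]
  -- main estimate on (x₀, 1)
  have hrint : IntegrableOn (fun x : ℝ => (x - x₀) ^ e) (Ioo x₀ 1) := by
    have hii : IntervalIntegrable (fun s : ℝ => s ^ e) volume 0 L :=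
      intervalIntegral.intervalIntegrable_rpow' he1
    have hii2 := hii.comp_sub_right x₀
    rw [show (0:ℝ) + x₀ = x₀ by ring, show L + x₀ = 1 by rw [hL]; ring,
      intervalIntegrable_iff_integrableOn_Ioo_of_le hx1.le] at hii2
    exact hii2
  have hgint : IntegrableOn (fun x : ℝ => 2*(u' 1)^2 + 2*D*(x - x₀) ^ e) (Ioo x₀ 1) := by
    apply Integrable.add
    · exact integrableOn_const measure_Ioo_lt_top.ne
    · exact IntegrableOn.congr_fun (hrint.const_mul (2*D)) (fun x _ => by ring)
        measurableSet_Ioo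
  have hrval : ∫ x in Ioo x₀ 1, (x - x₀) ^ e = L ^ (e+1) / (e+1) := by
    rw [← integral_Ioc_eq_integral_Ioo, ← integral_of_le hx1.le,
      intervalIntegral.integral_comp_sub_right (fun s => s ^ e) x₀,
      show x₀ - x₀ = (0:ℝ) by ring, show 1 - x₀ = L by rw [hL]]
    rw [integral_rpow (Or.inl he1), Real.zero_rpow (by linarith : e + 1 ≠ 0), sub_zero]
  have hIR : ∫ x in Ioo x₀ 1, (u' x)^2 ≤ 2*L*(u' 1)^2 + 2*D*(L ^ (e+1) / (e+1)) := by
    have hle : ∀ x ∈ Ioo x₀ 1, (u' x)^2 ≤ 2*(u' 1)^2 + 2*D*(x - x₀) ^ e := by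
      intro x hx
      rw [hftc x hx.1 hx.2.le]
      have h1 := hRbound x hx.1 hx.2.le
      have h2 := two_sq_aux (∫ s in x..1, u'' s) (u' 1) (D * (x - x₀) ^ e) h1
      linarith [h2]
    have h1 := setIntegral_mono_on
      (hu2.mono_set (Ioo_subset_Ioo hx0 le_rfl)) hgint measurableSet_Ioo hle
    have h2 : ∫ x in Ioo x₀ 1, (2*(u' 1)^2 + 2*D*(x - x₀) ^ e)
        = 2*(u' 1)^2 * L + 2*D*(L ^ (e+1) / (e+1)) := by
      rw [MeasureTheory.integral_add (f := fun _ => 2*(u' 1)^2) (g := fun x => 2*D*(x - x₀) ^ e)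
          (μ := volume.restrict (Ioo x₀ 1)) (integrableOn_const measure_Ioo_lt_top.ne)
        (IntegrableOn.congr_fun (hrint.const_mul (2*D)) (fun x _ => by ring)
          measurableSet_Ioo)]
      rw [setIntegral_const, Real.volume_real_Ioo_of_le hx1.le, smul_eq_mul]
      rw [MeasureTheory.integral_const_mul, hrval, ← hL]
      ring
    rw [h2] at h1
    linarith
  -- final assembly
  have hIR2 : ∫ x in Ioo x₀ 1, (u' x)^2 ≤ cB * B + cA * A := by
    have h1 : 2*L*(u' 1)^2 ≤ 2*L/h^2 * (9 * B / h + 3 * (D * h ^ e) * L^2) := by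
      have := mul_le_mul_of_nonneg_left hu'1 (by positivity : (0:ℝ) ≤ 2*L/h^2)
      calc 2*L*(u' 1)^2 = 2*L/h^2 * (h^2 * (u' 1)^2) := by field_simp
        _ ≤ _ := this
    have h2 : 2*L/h^2 * (9 * B / h + 3 * (D * h ^ e) * L^2) + 2*D*(L ^ (e+1) / (e+1))
        = cB * B + cA * A := by
      rw [hcB, hcA, hD]
      field_simp
      ring
    refine le_trans hIR ?_
    linarith [h1]
  refine le_trans hIR2 ?_
  have hexp : (cB + cA)*(B + A) = cB*B + cA*A + (cB*A + cA*B) := by ring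
  rw [hexp]
  have := mul_nonneg hcB0 hA0
  have := mul_nonneg hcA0 hB0
  linarith

set_option maxHeartbeats 1000000 in
lemma leftSided (a : ℝ → ℝ) (x₀ K M : ℝ)
    (hx0 : 0 < x₀) (hx1 : x₀ ≤ 1) (hK1 : 1 ≤ K) (hK2 : K < 2) (hM : 0 < M)
    (hw : ∀ t ∈ Ico (0:ℝ) x₀, (x₀ - t) ^ K ≤ M * a t)
    (hapos : ∀ x ∈ Icc (0:ℝ) 1, 0 ≤ a x) :
    ∃ C : ℝ, 0 ≤ C ∧ ∀ u u' u'' : ℝ → ℝ,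
      ACOn 0 1 u u' →
      IntegrableOn (fun x => (u' x)^2) (Ioo 0 1) →
      LocACOn x₀ u' u'' →
      IntegrableOn (fun x => a x * (u'' x)^2) (Ioo 0 1) →
      ∫ x in Ioo 0 x₀, (u' x)^2 ≤
        C * ((∫ x in Ioo (0:ℝ) 1, (u x)^2) + ∫ x in Ioo (0:ℝ) 1, a x * (u'' x)^2) := by
  have h01 : (0:ℝ) ≤ 1 := by norm_num
  obtain ⟨C, hC0, hCimp⟩ := oneSided (fun x => a (1 - x)) (1 - x₀) K M
    (by linarith) (by linarith) hK1 hK2 hM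
    (by
      intro t ht
      have h1 : 1 - t ∈ Ico (0:ℝ) x₀ := ⟨by linarith [ht.2], by linarith [ht.1]⟩
      have h2 := hw (1 - t) h1
      calc (t - (1 - x₀)) ^ K = (x₀ - (1 - t)) ^ K := by ring_nf
        _ ≤ M * a (1 - t) := h2)
    (by intro x hx; exact hapos (1 - x) ⟨by linarith [hx.2], by linarith [hx.1]⟩)
  refine ⟨C, hC0, ?_⟩
  intro u u' u'' hu hu2 hu' hA
  set v : ℝ → ℝ := fun x => u (1 - x) with hv
  set v' : ℝ → ℝ := fun x => -u' (1 - x) with hv'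
  set v'' : ℝ → ℝ := fun x => u'' (1 - x) with hv''
  have hACv : ACOn 0 1 v v' := by
    constructor
    · have h := integrableOn_Icc_refl h01 hu.1
      norm_num at h
      exact h.neg
    · intro x hx
      have hx1' : 1 - x ∈ Icc (0:ℝ) 1 := ⟨by linarith [hx.2], by linarith [hx.1]⟩
      have e1 := hu.2 (1 - x) hx1'
      have e2 := hu.2 1 ⟨h01, le_rfl⟩
      have hii10 : IntervalIntegrable u' volume 0 1 := by
        apply IntegrableOn.intervalIntegrable
        rw [uIcc_of_le h01]
        exact hu.1
      have hii1x : IntervalIntegrable u' volume 0 (1 - x) := by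
        apply IntegrableOn.intervalIntegrable
        rw [uIcc_of_le hx1'.1]
        exact hu.1.mono_set (Icc_subset_Icc le_rfl hx1'.2)
      have e3 := intervalIntegral.integral_interval_sub_left hii10 hii1x
      have e4 : ∫ t in (0:ℝ)..x, v' t = -(∫ t in (1-x)..(1:ℝ), u' t) := by
        have e5 : ∫ t in (0:ℝ)..x, v' t = -(∫ t in (0:ℝ)..x, u' (1 - t)) := by
          simp [hv', intervalIntegral.integral_neg]
        rw [e5, intervalIntegral.integral_comp_sub_left u' 1]
        norm_num
      show v x = v 0 + ∫ t in (0:ℝ)..x, v' t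
      rw [e4]
      simp only [hv]
      rw [show (1:ℝ) - 0 = 1 by norm_num, e1, e2]
      linarith [e3]
  have hv2 : IntegrableOn (fun x => (v' x)^2) (Ioo 0 1) := by
    have h := integrableOn_Ioo_refl h01 hu2
    norm_num at h
    exact h.congr_fun (fun x _ => by simp [hv']) measurableSet_Ioo
  have hLocv : LocACOn (1 - x₀) v' v'' := by
    intro c d hc hd hcd hmem
    have hmem' : x₀ ∉ Icc (1 - d) (1 - c) := by
      intro hx; exact hmem ⟨by linarith [hx.2], by linarith [hx.1]⟩
    have hac := hu' (1 - d) (1 - c) (by linarith) (by linarith) (by linarith) hmem'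
    constructor
    · have h := integrableOn_Icc_refl (by linarith : (1:ℝ) - d ≤ 1 - c) hac.1
      have hsets : Icc (1 - (1 - c)) (1 - (1 - d)) = Icc c d := by norm_num
      rwa [hsets] at h
    · intro x hx
      have hxd : 1 - x ∈ Icc (1 - d) (1 - c) := ⟨by linarith [hx.2], by linarith [hx.1]⟩
      have hcd' : 1 - c ∈ Icc (1 - d) (1 - c) := ⟨by linarith, le_rfl⟩
      have e1 := hac.2 (1 - x) hxd
      have e2 := hac.2 (1 - c) hcd'
      have hii1 : IntervalIntegrable u'' volume (1-d) (1-c) := by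
        apply IntegrableOn.intervalIntegrable
        rw [uIcc_of_le (by linarith : (1:ℝ)-d ≤ 1-c)]
        exact hac.1
      have hii2 : IntervalIntegrable u'' volume (1-d) (1-x) := by
        apply IntegrableOn.intervalIntegrable
        rw [uIcc_of_le (by linarith [hx.2] : (1:ℝ)-d ≤ 1-x)]
        exact hac.1.mono_set (Icc_subset_Icc le_rfl (by linarith [hx.1]))
      have e3 := intervalIntegral.integral_interval_sub_left hii1 hii2
      have e4 : ∫ t in c..x, v'' t = ∫ t in (1-x)..(1-c), u'' t := by
        have : ∫ t in c..x, v'' t = ∫ t in c..x, u'' (1 - t) := rfl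
        rw [this, intervalIntegral.integral_comp_sub_left u'' 1]
      show v' x = v' c + ∫ t in c..x, v'' t
      rw [e4]
      simp only [hv']
      linarith [e1, e2, e3]
  have hAv : IntegrableOn (fun x => a (1 - x) * (v'' x)^2) (Ioo 0 1) := by
    have h := integrableOn_Ioo_refl h01 hA
    norm_num at h
    exact h.congr_fun (fun x _ => by simp [hv'']) measurableSet_Ioo
  have hmain := hCimp v v' v'' hACv hv2 hLocv hAv
  have t1 : ∫ x in Ioo (1-x₀) 1, (v' x)^2 = ∫ x in Ioo 0 x₀, (u' x)^2 := by
    have h1 : ∫ x in Ioo (1-x₀) 1, (v' x)^2 = ∫ x in Ioo (1-x₀) 1, (u' (1 - x))^2 :=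
      setIntegral_congr_fun measurableSet_Ioo (fun x _ => by simp [hv'])
    have h2 := integral_Ioo_refl (fun y => (u' y)^2) (by linarith : 1 - x₀ ≤ 1)
    norm_num at h2
    rw [h1, h2]
  have t2 : ∫ x in Ioo (0:ℝ) 1, (v x)^2 = ∫ x in Ioo (0:ℝ) 1, (u x)^2 := by
    have h2 := integral_Ioo_refl (fun y => (u y)^2) h01
    norm_num at h2
    exact h2
  have t3 : ∫ x in Ioo (0:ℝ) 1, a (1 - x) * (v'' x)^2
      = ∫ x in Ioo (0:ℝ) 1, a x * (u'' x)^2 := by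
    have h2 := integral_Ioo_refl (fun y => a y * (u'' y)^2) h01
    norm_num at h2
    exact h2
  rw [t1, t2, t3] at hmain
  exact hmain
/-- for a strongly degenerate `a` satisfying Hypothesis (H), on `H²_a(0,1)`
we have `‖u'‖² ≤ C(‖u‖² + ‖√a u''‖²)`, hence the norms `‖·‖_{H²_a}` and `‖·‖_{2,a}`
are equivalent. -/
theorem statement1 (a : ℝ → ℝ) (x₀ : ℝ) (ha : StronglyDeg a x₀) (hH : HypH a x₀) :
    ∃ C > 0, ∀ u u' u'' : ℝ → ℝ,
      -- u ∈ H¹(0,1), with u' locally absolutely continuous on [0,1] \ {x₀}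
      ACOn 0 1 u u' →
      MeasureTheory.IntegrableOn (fun x => (u' x) ^ 2) (Set.Ioo 0 1) →
      LocACOn x₀ u' u'' →
      -- √a·u'' ∈ L²(0,1)
      MeasureTheory.IntegrableOn (fun x => a x * (u'' x) ^ 2) (Set.Ioo 0 1) →
      -- the main estimate
      (sqL2 u' ≤ C * (sqL2 u + ∫ x in Set.Ioo (0:ℝ) 1, a x * (u'' x) ^ 2)) ∧
      -- consequently the two (squared) norms are equivalent
      (sqL2 u + ∫ x in Set.Ioo (0:ℝ) 1, a x * (u'' x) ^ 2 ≤
        sqL2 u + sqL2 u' + ∫ x in Set.Ioo (0:ℝ) 1, a x * (u'' x) ^ 2) ∧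
      (sqL2 u + sqL2 u' + ∫ x in Set.Ioo (0:ℝ) 1, a x * (u'' x) ^ 2 ≤
        (1 + C) * (sqL2 u + ∫ x in Set.Ioo (0:ℝ) 1, a x * (u'' x) ^ 2)) := by
  
  obtain ⟨hacont, hx₀mem, hax₀, hap, hnint⟩ := ha
  obtain ⟨K, hK1, hK2, hanti, hmono⟩ := hH
  have hapos : ∀ x ∈ Set.Icc (0:ℝ) 1, 0 ≤ a x := by
    intro x hx
    rcases eq_or_ne x x₀ with rfl | hne
    · exact le_of_eq hax₀.symm
    · exact (hap x hx hne).le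
  have hx₀0 : (0:ℝ) ≤ x₀ := hx₀mem.1
  have hx₀1 : x₀ ≤ 1 := hx₀mem.2
  have hR : ∃ CR : ℝ, 0 ≤ CR ∧ ∀ u u' u'' : ℝ → ℝ, ACOn 0 1 u u' →
      MeasureTheory.IntegrableOn (fun x => (u' x) ^ 2) (Set.Ioo 0 1) →
      LocACOn x₀ u' u'' →
      MeasureTheory.IntegrableOn (fun x => a x * (u'' x) ^ 2) (Set.Ioo 0 1) →
      ∫ x in Set.Ioo x₀ 1, (u' x)^2 ≤
        CR * ((∫ x in Set.Ioo (0:ℝ) 1, (u x)^2) +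
          ∫ x in Set.Ioo (0:ℝ) 1, a x * (u'' x) ^ 2) := by
    rcases lt_or_eq_of_le hx₀1 with hlt | heq
    · have h1ne : (1:ℝ) ≠ x₀ := fun hc => by rw [← hc] at hlt; exact lt_irrefl _ hlt
      have ha1 : 0 < a 1 := hap 1 ⟨by norm_num, le_rfl⟩ h1ne
      have hw : ∀ t ∈ Set.Ioc x₀ 1, (t - x₀) ^ K ≤ ((1-x₀)^K / a 1) * a t := by
        intro t ht
        have hat : 0 < a t := hap t ⟨le_trans hx₀0 ht.1.le, ht.2⟩ (ne_of_gt ht.1)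
        have hmem1 : (1:ℝ) ∈ Set.Ioc x₀ 1 := ⟨hlt, le_rfl⟩
        have h2 := hmono ht hmem1 ht.2
        simp only [] at h2
        rw [abs_of_nonneg (by linarith [ht.1] : (0:ℝ) ≤ t - x₀),
          abs_of_nonneg (by linarith : (0:ℝ) ≤ 1 - x₀)] at h2
        rw [div_le_div_iff₀ hat ha1] at h2
        rw [div_mul_eq_mul_div, le_div_iff₀ ha1]
        linarith
      have hM : 0 < (1-x₀)^K / a 1 :=
        div_pos (Real.rpow_pos_of_pos (by linarith) _) ha1
      obtain ⟨CR, h0, himp⟩ := oneSided a x₀ K _ hx₀0 hlt hK1 hK2 hM hw hapos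
      exact ⟨CR, h0, himp⟩
    · refine ⟨0, le_rfl, fun u u' u'' _ _ _ _ => ?_⟩
      rw [heq]
      simp
  have hL : ∃ CL : ℝ, 0 ≤ CL ∧ ∀ u u' u'' : ℝ → ℝ, ACOn 0 1 u u' →
      MeasureTheory.IntegrableOn (fun x => (u' x) ^ 2) (Set.Ioo 0 1) →
      LocACOn x₀ u' u'' →
      MeasureTheory.IntegrableOn (fun x => a x * (u'' x) ^ 2) (Set.Ioo 0 1) →
      ∫ x in Set.Ioo 0 x₀, (u' x)^2 ≤
        CL * ((∫ x in Set.Ioo (0:ℝ) 1, (u x)^2) +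
          ∫ x in Set.Ioo (0:ℝ) 1, a x * (u'' x) ^ 2) := by
    rcases lt_or_eq_of_le hx₀0 with hlt | heq
    · have h0ne : (0:ℝ) ≠ x₀ := ne_of_lt hlt
      have ha0 : 0 < a 0 := hap 0 ⟨le_rfl, by norm_num⟩ h0ne
      have hw : ∀ t ∈ Set.Ico (0:ℝ) x₀, (x₀ - t) ^ K ≤ (x₀^K / a 0) * a t := by
        intro t ht
        have hat : 0 < a t := hap t ⟨ht.1, le_trans ht.2.le hx₀1⟩ (ne_of_lt ht.2)
        have hmem0 : (0:ℝ) ∈ Set.Ico (0:ℝ) x₀ := ⟨le_rfl, hlt⟩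
        have h2 := hanti hmem0 ht ht.1
        simp only [] at h2
        rw [abs_of_nonpos (by linarith [ht.2] : t - x₀ ≤ 0),
          abs_of_nonpos (by linarith : (0:ℝ) - x₀ ≤ 0)] at h2
        rw [show -(t - x₀) = x₀ - t by ring, show -((0:ℝ) - x₀) = x₀ by ring] at h2
        rw [div_le_div_iff₀ hat ha0] at h2
        rw [div_mul_eq_mul_div, le_div_iff₀ ha0]
        linarith
      have hM : 0 < x₀^K / a 0 := div_pos (Real.rpow_pos_of_pos hlt _) ha0
      obtain ⟨CL, h0, himp⟩ := leftSided a x₀ K _ hlt hx₀1 hK1 hK2 hM hw hapos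
      exact ⟨CL, h0, himp⟩
    · refine ⟨0, le_rfl, fun u u' u'' _ _ _ _ => ?_⟩
      rw [← heq]
      simp
  obtain ⟨CR, hCR0, hCR⟩ := hR
  obtain ⟨CL, hCL0, hCL⟩ := hL
  refine ⟨CR + CL + 1, by positivity, ?_⟩
  intro u u' u'' h1 h2 h3 h4
  have hsplit := integral_Ioo_split (fun x => (u' x)^2) hx₀0 hx₀1 h2
  have hr := hCR u u' u'' h1 h2 h3 h4
  have hl := hCL u u' u'' h1 h2 h3 h4
  have hX0 : 0 ≤ sqL2 u + ∫ x in Set.Ioo (0:ℝ) 1, a x * (u'' x) ^ 2 := by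
    have hA0 : 0 ≤ ∫ x in Set.Ioo (0:ℝ) 1, a x * (u'' x) ^ 2 :=
      setIntegral_nonneg measurableSet_Ioo
        (fun x hx => mul_nonneg (hapos x ⟨hx.1.le, hx.2.le⟩) (sq_nonneg _))
    have hB0 : 0 ≤ sqL2 u := setIntegral_nonneg measurableSet_Ioo (fun x _ => sq_nonneg _)
    linarith
  have hS0 : 0 ≤ sqL2 u' := setIntegral_nonneg measurableSet_Ioo (fun x _ => sq_nonneg _)
  have hmain : sqL2 u' ≤ (CR + CL + 1) *
      (sqL2 u + ∫ x in Set.Ioo (0:ℝ) 1, a x * (u'' x) ^ 2) := by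
    have hSeq : sqL2 u' = (∫ x in Set.Ioo 0 x₀, (u' x)^2) + ∫ x in Set.Ioo x₀ 1, (u' x)^2 :=
      hsplit
    have hexp : (CR + CL + 1) * (sqL2 u + ∫ x in Set.Ioo (0:ℝ) 1, a x * (u'' x) ^ 2)
        = CR * (sqL2 u + ∫ x in Set.Ioo (0:ℝ) 1, a x * (u'' x) ^ 2)
          + CL * (sqL2 u + ∫ x in Set.Ioo (0:ℝ) 1, a x * (u'' x) ^ 2)
          + (sqL2 u + ∫ x in Set.Ioo (0:ℝ) 1, a x * (u'' x) ^ 2) := by ring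
    rw [hSeq, hexp]
    have hr' : ∫ x in Set.Ioo x₀ 1, (u' x)^2 ≤
        CR * (sqL2 u + ∫ x in Set.Ioo (0:ℝ) 1, a x * (u'' x) ^ 2) := hr
    have hl' : ∫ x in Set.Ioo 0 x₀, (u' x)^2 ≤
        CL * (sqL2 u + ∫ x in Set.Ioo (0:ℝ) 1, a x * (u'' x) ^ 2) := hl
    linarith
  refine ⟨hmain, by linarith, ?_⟩
  have hexp2 : (1 + (CR + CL + 1)) *
      (sqL2 u + ∫ x in Set.Ioo (0:ℝ) 1, a x * (u'' x) ^ 2)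
      = (sqL2 u + ∫ x in Set.Ioo (0:ℝ) 1, a x * (u'' x) ^ 2)
        + (CR + CL + 1) * (sqL2 u + ∫ x in Set.Ioo (0:ℝ) 1, a x * (u'' x) ^ 2) := by ring
  rw [hexp2]
  linarith
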